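/- Consider the two-layer system dv/dt = -(1/2) v (v^2 - v*^2 (sin φ - φ cos φ)/π), dφ/dt = v*^2 (φ sin φ)/(2π), with v(0) = v_0 > 0, φ(0) = φ_0 ∈ (0, π). Let ε_0 = 1 - (sin φ_0 - φ_0 cos φ_0)/π. Then for all t > 0: v* sqrt((1-ε_0)/(1 - (1 - (1-ε_0)(v*/v_0)^2) e^{-(1-ε_0) v*^2 t})) < v(t) < v* sqrt(1/(1 - (1 - (v*/v_0)^2) e^{-v*^2 t})). -/

import Mathlib

open Real

set_option maxHeartbeats 1000000

noncomputable def mySinc (x : ℝ) : ℝ := if x = 0 then 1 else Real.sin x / x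

lemma mySinc_mul (x : ℝ) : mySinc x * x = Real.sin x := by
  unfold mySinc
  split
  · simp [*]
  · field_simp

lemma continuous_mySinc : Continuous mySinc := by
  rw [continuous_iff_continuousAt]
  intro x
  rcases eq_or_ne x 0 with rfl | hx
  · have h1 : Filter.Tendsto (slope Real.sin 0) (nhdsWithin 0 {(0:ℝ)}ᶜ) (nhds 1) := by
      have := (Real.hasDerivAt_sin 0)
      rw [hasDerivAt_iff_tendsto_slope] at this
      simpa using this
    have h2 : Filter.Tendsto mySinc (nhdsWithin 0 {(0:ℝ)}ᶜ) (nhds 1) := by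
      refine h1.congr' ?_
      filter_upwards [self_mem_nhdsWithin] with y hy
      simp only [Set.mem_compl_iff, Set.mem_singleton_iff] at hy
      simp [slope, mySinc, hy, div_eq_inv_mul]
    have : Filter.Tendsto mySinc (nhds 0) (nhds 1) := by
      rw [← nhdsNE_sup_pure 0]
      refine Filter.Tendsto.sup h2 ?_
      refine Filter.tendsto_pure_left.mpr fun s hs => ?_
      have h10 : mySinc 0 = 1 := by simp [mySinc]
      rw [h10]; exact mem_of_mem_nhds hs
    simpa [ContinuousAt, mySinc] using this
  · have : ContinuousAt (fun y => Real.sin y / y) x :=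
      (Real.continuous_sin.continuousAt).div continuousAt_id hx
    refine this.congr ?_
    filter_upwards [isOpen_compl_singleton.mem_nhds hx] with y hy
    simp only [Set.mem_compl_iff, Set.mem_singleton_iff] at hy
    simp [mySinc, hy]

/-- If `f' = a f` with `a` continuous and `f 0 > 0` then `f > 0` everywhere. -/
lemma linear_pos (a f : ℝ → ℝ) (ha : Continuous a)
    (hf : ∀ t, HasDerivAt f (a t * f t) t) (h0 : 0 < f 0) : ∀ t, 0 < f t := by
  set A : ℝ → ℝ := fun t => ∫ s in (0:ℝ)..t, a s with hA
  have hA' : ∀ t, HasDerivAt A (a t) t := fun t =>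
    (ha.integral_hasStrictDerivAt 0 t).hasDerivAt
  set g : ℝ → ℝ := fun t => f t * Real.exp (-A t) with hg
  have hg' : ∀ t, HasDerivAt g 0 t := by
    intro t
    have h1 : HasDerivAt (fun t => Real.exp (-A t)) (-a t * Real.exp (-A t)) t := by
      have := ((hA' t).neg).exp
      refine (this).congr_deriv (Eq.symm ?_)
      simp only [Pi.neg_apply]
      ring
    have := (hf t).mul h1
    refine (this).congr_deriv (Eq.symm ?_)
    ring
  have hconst : ∀ t, g t = g 0 := by
    intro t
    exact is_const_of_deriv_eq_zero (fun x => (hg' x).differentiableAt)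
      (fun x => (hg' x).deriv) t 0
  intro t
  have h1 : g t = g 0 := hconst t
  have h2 : g 0 = f 0 * Real.exp (-A 0) := rfl
  have h3 : f t = g t * Real.exp (A t) := by
    simp [hg, mul_assoc, ← Real.exp_add]
  rw [h3, h1, h2]
  positivity

/-- Gronwall-type strict positivity: `D' = b - a D`, `D 0 = 0`, `b > 0` on `(0,∞)`. -/
lemma gronwall_pos (a b D : ℝ → ℝ) (ha : Continuous a)
    (hD : ∀ t, HasDerivAt D (b t - a t * D t) t)
    (hb : ∀ s, 0 < s → 0 < b s) (hD0 : D 0 = 0) :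
    ∀ t, 0 < t → 0 < D t := by
  set A : ℝ → ℝ := fun t => ∫ s in (0:ℝ)..t, a s with hA
  have hA' : ∀ t, HasDerivAt A (a t) t := fun t =>
    (ha.integral_hasStrictDerivAt 0 t).hasDerivAt
  set h : ℝ → ℝ := fun t => D t * Real.exp (A t) with hh
  have hh' : ∀ t, HasDerivAt h (b t * Real.exp (A t)) t := by
    intro t
    have h1 : HasDerivAt (fun t => Real.exp (A t)) (a t * Real.exp (A t)) t := by
      have := (hA' t).exp
      convert this using 1
      ring
    have := (hD t).mul h1
    refine (this).congr_deriv (Eq.symm ?_)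
    ring
  intro t ht
  have hmono : StrictMonoOn h (Set.Icc 0 t) := by
    refine strictMonoOn_of_deriv_pos (convex_Icc 0 t)
      (fun x _ => ((hh' x).differentiableAt).continuousAt.continuousWithinAt) ?_
    intro x hx
    rw [interior_Icc] at hx
    rw [(hh' x).deriv]
    exact mul_pos (hb x hx.1) (Real.exp_pos _)
  have h0 : h 0 = 0 := by simp [hh, hD0]
  have := hmono (Set.left_mem_Icc.2 ht.le) (Set.right_mem_Icc.2 ht.le) ht
  rw [h0] at this
  simp only [hh] at this
  have hE : 0 < Real.exp (A t) := Real.exp_pos _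
  nlinarith [this, hE]

/-- Magnitude bounds for the two-layer (`m = 1`) single ReLU neuron gradient flow with
balanced initialization. -/
theorem two_layer_magnitude_bounds
    (vs v0 φ0 : ℝ) (hvs : 0 < vs) (hv0 : 0 < v0) (hφ0 : 0 < φ0 ∧ φ0 < π)
    (v φ : ℝ → ℝ) (hiv : v 0 = v0) (hiφ : φ 0 = φ0)
    (hv : ∀ t, HasDerivAt v
      (-(1/2) * v t * ((v t)^2 - vs^2 * (Real.sin (φ t) - φ t * Real.cos (φ t)) / π)) t)
    (hφ : ∀ t, HasDerivAt φ (vs^2 * (φ t * Real.sin (φ t)) / (2*π)) t)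
    (ε0 : ℝ) (hε0 : ε0 = 1 - (Real.sin φ0 - φ0 * Real.cos φ0) / π) :
    ∀ t > 0,
      vs * Real.sqrt ((1-ε0) /
          (1 - (1 - (1-ε0) * (vs/v0)^2) * Real.exp (-(1-ε0) * vs^2 * t))) < v t ∧
      v t < vs * Real.sqrt (1 / (1 - (1 - (vs/v0)^2) * Real.exp (-vs^2 * t))) := by
  have hπ : (0:ℝ) < π := Real.pi_pos
  have hφc : Continuous φ :=
    continuous_iff_continuousAt.mpr fun t => (hφ t).differentiableAt.continuousAt
  have hvc : Continuous v :=
    continuous_iff_continuousAt.mpr fun t => (hv t).differentiableAt.continuousAt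
  -- positivity of v
  have hvpos : ∀ t, 0 < v t := by
    refine linear_pos (fun t => -(1/2) * ((v t)^2 - vs^2 * (Real.sin (φ t) - φ t * Real.cos (φ t)) / π)) v ?_ (fun t => by convert hv t using 1; ring) (by rw [hiv]; exact hv0)
    fun_prop
  -- positivity of φ
  have hφpos : ∀ t, 0 < φ t := by
    refine linear_pos (fun t => vs^2 * Real.sin (φ t) / (2*π)) φ ?_ (fun t => by convert hφ t using 1; ring) (by rw [hiφ]; exact hφ0.1)
    fun_prop
  -- φ stays below π
  have hφlt : ∀ t, φ t < π := by
    have hψ : ∀ t, 0 < π - φ t := by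
      refine linear_pos (fun t => -(vs^2 * φ t * mySinc (π - φ t)) / (2*π)) (fun t => π - φ t) ?_ ?_ (by show (0:ℝ) < π - φ 0; rw [hiφ]; linarith [hφ0.2])
      · exact (((continuous_const.mul hφc).mul (continuous_mySinc.comp (continuous_const.sub hφc))).neg).div_const _
      · intro t
        have h1 : HasDerivAt (fun t => π - φ t) (-(vs^2 * (φ t * Real.sin (φ t)) / (2*π))) t := (hφ t).const_sub π
        convert h1 using 1
        have h2 : Real.sin (φ t) = mySinc (π - φ t) * (π - φ t) := by
          rw [mySinc_mul, Real.sin_pi_sub]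
        rw [h2]; ring
    intro t; linarith [hψ t]
  -- φ is strictly increasing
  have hφmono : StrictMono φ := by
    refine strictMono_of_deriv_pos fun t => ?_
    rw [(hφ t).deriv]
    have hs := Real.sin_pos_of_pos_of_lt_pi (hφpos t) (hφlt t)
    apply div_pos (mul_pos (by positivity) (mul_pos (hφpos t) hs)) (by positivity)
  -- the function g and its monotonicity
  set g : ℝ → ℝ := fun x => (Real.sin x - x * Real.cos x) / π with hgdef
  have hg' : ∀ x, HasDerivAt g (x * Real.sin x / π) x := by
    intro x
    have h1 : HasDerivAt (fun x : ℝ => Real.sin x - x * Real.cos x)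
        (Real.cos x - (1 * Real.cos x + x * (-Real.sin x))) x :=
      (Real.hasDerivAt_sin x).sub ((hasDerivAt_id x).mul (Real.hasDerivAt_cos x))
    have h2 := h1.div_const π
    refine (h2).congr_deriv (Eq.symm ?_)
    ring
  have hgmono : StrictMonoOn g (Set.Icc 0 π) := by
    refine strictMonoOn_of_deriv_pos (convex_Icc 0 π)
      (fun x _ => ((hg' x).differentiableAt).continuousAt.continuousWithinAt) ?_
    intro x hx
    rw [interior_Icc] at hx
    rw [(hg' x).deriv]
    exact div_pos (mul_pos hx.1 (Real.sin_pos_of_pos_of_lt_pi hx.1 hx.2)) hπ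
  have hg0 : g 0 = 0 := by simp [hgdef]
  have hgπ : g π = 1 := by
    simp [hgdef, Real.sin_pi, Real.cos_pi]
  set κ : ℝ := 1 - ε0 with hκdef
  have hκφ : κ = g φ0 := by rw [hκdef, hε0, hgdef]; ring
  have hφmem : ∀ t, φ t ∈ Set.Icc (0:ℝ) π := fun t => ⟨(hφpos t).le, (hφlt t).le⟩
  have hφ0mem : φ0 ∈ Set.Icc (0:ℝ) π := ⟨hφ0.1.le, hφ0.2.le⟩
  have hκpos : 0 < κ := by
    rw [hκφ, ← hg0]
    exact hgmono (Set.left_mem_Icc.2 hπ.le) hφ0mem hφ0.1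
  have hκlt : κ < 1 := by
    rw [hκφ, ← hgπ]
    exact hgmono hφ0mem (Set.right_mem_Icc.2 hπ.le) hφ0.2
  set G : ℝ → ℝ := fun t => g (φ t) with hGdef
  have hGc : Continuous G := by
    have hgc : Continuous g := by
      rw [hgdef]; fun_prop
    exact hgc.comp hφc
  have hG1 : ∀ t, G t < 1 := fun t => by
    rw [hGdef, ← hgπ]
    exact hgmono (hφmem t) (Set.right_mem_Icc.2 hπ.le) (hφlt t)
  have hGκ : ∀ t, 0 < t → κ < G t := by
    intro t ht
    rw [hGdef, hκφ, ← hiφ]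
    exact hgmono (by rw [hiφ]; exact hφ0mem) (hφmem t) (by simpa using hφmono ht)
  have hGpos : ∀ t, 0 < G t := by
    intro t
    rw [hGdef, ← hg0]
    exact hgmono (Set.left_mem_Icc.2 hπ.le) (hφmem t) (hφpos t)
  -- the reciprocal square w and its ODE
  set w : ℝ → ℝ := fun t => ((v t)^2)⁻¹ with hwdef
  have hwpos : ∀ t, 0 < w t := fun t => by
    have := hvpos t
    simp only [hwdef]; positivity
  have hw' : ∀ t, HasDerivAt w (1 - vs^2 * G t * w t) t := by
    intro t
    have hne : (v t)^2 ≠ 0 := pow_ne_zero 2 (hvpos t).ne'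
    have h1 := ((hv t).pow 2).inv hne
    refine (h1).congr_deriv (Eq.symm ?_)
    have hvne : v t ≠ 0 := (hvpos t).ne'
    simp only [hwdef, hGdef, hgdef, Pi.pow_apply]
    field_simp
    ring
  have hw0 : w 0 = (v0^2)⁻¹ := by simp [hwdef, hiv]
  -- upper comparison function
  set w₁ : ℝ → ℝ := fun t => (vs^2)⁻¹ + ((v0^2)⁻¹ - (vs^2)⁻¹) * Real.exp (-vs^2 * t) with hw₁def
  have hw₁' : ∀ t, HasDerivAt w₁ (1 - vs^2 * w₁ t) t := by
    intro t
    have h1 : HasDerivAt (fun t : ℝ => -vs^2 * t) (-vs^2) t := by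
      simpa using (hasDerivAt_id t).const_mul (-vs^2)
    have h2 := ((h1.exp).const_mul ((v0^2)⁻¹ - (vs^2)⁻¹)).const_add ((vs^2)⁻¹)
    refine (h2).congr_deriv (Eq.symm ?_)
    simp only [hw₁def]
    field_simp
    ring
  have hw₁pos : ∀ t, 0 ≤ t → 0 < w₁ t := by
    intro t ht
    have he1 : Real.exp (-vs^2 * t) ≤ 1 := by
      apply Real.exp_le_one_iff.mpr; nlinarith
    have he0 : 0 < Real.exp (-vs^2 * t) := Real.exp_pos _
    have : (0:ℝ) < (vs^2)⁻¹ := by positivity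
    have : (0:ℝ) < (v0^2)⁻¹ := by positivity
    simp only [hw₁def]
    nlinarith
  -- w > w₁ on (0, ∞)
  have hupper : ∀ t, 0 < t → w₁ t < w t := by
    intro t ht
    have := gronwall_pos (fun t => vs^2 * G t) (fun t => vs^2 * (1 - G t) * w₁ t)
      (fun t => w t - w₁ t) (by fun_prop) ?_ ?_ ?_ t ht
    · linarith
    · intro s
      have := (hw' s).sub (hw₁' s)
      refine (this).congr_deriv (Eq.symm ?_)
      ring
    · intro s hs
      have h1 : 0 < 1 - G s := by linarith [hG1 s]
      have h2 := hw₁pos s hs.le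
      positivity
    · show w 0 - w₁ 0 = 0
      rw [hw0]
      simp only [hw₁def, mul_zero, Real.exp_zero]
      ring
  -- lower comparison function
  set w₂ : ℝ → ℝ := fun t => (κ*vs^2)⁻¹ + ((v0^2)⁻¹ - (κ*vs^2)⁻¹) * Real.exp (-(κ*vs^2) * t) with hw₂def
  have hw₂' : ∀ t, HasDerivAt w₂ (1 - κ*vs^2 * w₂ t) t := by
    intro t
    have h1 : HasDerivAt (fun t : ℝ => -(κ*vs^2) * t) (-(κ*vs^2)) t := by
      simpa using (hasDerivAt_id t).const_mul (-(κ*vs^2))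
    have h2 := ((h1.exp).const_mul ((v0^2)⁻¹ - (κ*vs^2)⁻¹)).const_add ((κ*vs^2)⁻¹)
    refine (h2).congr_deriv (Eq.symm ?_)
    simp only [hw₂def]
    field_simp
    ring
  have hw₂pos : ∀ t, 0 ≤ t → 0 < w₂ t := by
    intro t ht
    have he1 : Real.exp (-(κ*vs^2) * t) ≤ 1 := by
      apply Real.exp_le_one_iff.mpr
      have : 0 ≤ κ * vs^2 * t := by positivity
      nlinarith
    have he0 : 0 < Real.exp (-(κ*vs^2) * t) := Real.exp_pos _
    have h3 : (0:ℝ) < (κ*vs^2)⁻¹ := by positivity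
    have h4 : (0:ℝ) < (v0^2)⁻¹ := by positivity
    simp only [hw₂def]
    nlinarith
  -- w < w₂ on (0, ∞)
  have hlower : ∀ t, 0 < t → w t < w₂ t := by
    intro t ht
    have := gronwall_pos (fun _ => κ*vs^2) (fun s => vs^2 * (G s - κ) * w s)
      (fun s => w₂ s - w s) continuous_const ?_ ?_ ?_ t ht
    · linarith
    · intro s
      have := (hw₂' s).sub (hw' s)
      refine (this).congr_deriv (Eq.symm ?_)
      ring
    · intro s hs
      have h1 : 0 < G s - κ := by linarith [hGκ s hs]
      have h2 := hwpos s
      positivity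
    · show w₂ 0 - w 0 = 0
      rw [hw0]
      simp only [hw₂def, mul_zero, Real.exp_zero]
      ring
  -- final conversion
  intro t ht
  have hwt := hwpos t
  have hw₁t := hw₁pos t ht.le
  have hw₂t := hw₂pos t ht.le
  have hut := hupper t ht
  have hlt := hlower t ht
  constructor
  · -- lower bound
    have hden : 1 - (1 - κ * (vs/v0)^2) * Real.exp (-κ * vs^2 * t) = κ * vs^2 * w₂ t := by
      simp only [hw₂def]
      rw [show -κ * vs^2 * t = -(κ*vs^2) * t by ring]
      field_simp
      ring
    rw [hden]
    have harg : κ / (κ * vs^2 * w₂ t) = (vs^2)⁻¹ * (w₂ t)⁻¹ := by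
      field_simp
    rw [harg]
    have h1 : vs * Real.sqrt ((vs^2)⁻¹ * (w₂ t)⁻¹) = Real.sqrt ((w₂ t)⁻¹) := by
      rw [Real.sqrt_mul (by positivity), show ((vs^2)⁻¹ : ℝ) = (vs⁻¹)^2 by ring,
        Real.sqrt_sq (by positivity)]
      field_simp
    rw [h1]
    have h2 : (w₂ t)⁻¹ < (v t)^2 := by
      have : (v t)^2 = (w t)⁻¹ := by simp [hwdef]
      rw [this]
      exact inv_strictAnti₀ hwt hlt
    calc Real.sqrt ((w₂ t)⁻¹) < Real.sqrt ((v t)^2) := Real.sqrt_lt_sqrt (by positivity) h2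
      _ = v t := Real.sqrt_sq (hvpos t).le
  · -- upper bound
    have hden : 1 - (1 - (vs/v0)^2) * Real.exp (-vs^2 * t) = vs^2 * w₁ t := by
      simp only [hw₁def]
      field_simp
      ring
    rw [hden]
    have harg : 1 / (vs^2 * w₁ t) = (vs^2)⁻¹ * (w₁ t)⁻¹ := by
      field_simp
    rw [harg]
    have h1 : vs * Real.sqrt ((vs^2)⁻¹ * (w₁ t)⁻¹) = Real.sqrt ((w₁ t)⁻¹) := by
      rw [Real.sqrt_mul (by positivity), show ((vs^2)⁻¹ : ℝ) = (vs⁻¹)^2 by ring,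
        Real.sqrt_sq (by positivity)]
      field_simp
    rw [h1]
    have h2 : (v t)^2 < (w₁ t)⁻¹ := by
      have : (v t)^2 = (w t)⁻¹ := by simp [hwdef]
      rw [this]
      exact inv_strictAnti₀ hw₁t hut
    calc v t = Real.sqrt ((v t)^2) := (Real.sqrt_sq (hvpos t).le).symm
      _ < Real.sqrt ((w₁ t)⁻¹) := Real.sqrt_lt_sqrt (by positivity) h2
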